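/- For each fixed k, let f_k(z) = y_k(1,z⁴)·ω₁(z), where y_k(t,z⁴) is the solution of the scalar fourth-order problem normalized so that the first boundary-coefficient relation holds, and let z_{k,j} be the positive characteristic roots (so λ_{k,j} = z⁴_{k,j} + γ_k are the eigenvalues). Then the derivative of f_k at z_{k,j} equals f'_k(z_{k,j}) = 4 z³_{k,j} ‖Ψ_{k,j}‖²_Λ = 4 z³_{k,j} / c²_{k,j}, where ‖Ψ_{k,j}‖²_Λ is the squared norm of the corresponding eigenvector and c²_{k,j} are the norming constants. -/

import Mathlib

/-!
Formalization of statements from: N. Aslanova, Kh. Aslanov,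
"On extensions and spectral problems for fourth order differential operator equation".
Scalar spectral problem (5.1)-(5.4) for a fixed `k`.
-/

noncomputable section
open MeasureTheory Filter
open scoped Topology

namespace FourthOrderPaper

namespace Scalar

/-- `y_k(t, z⁴) = c₁ sinh(zt) + c₂ sin(zt)`: the solution of the scalar equation
`y⁗ + γ_k y = (z⁴ + γ_k) y` satisfying `y(0) = y''(0) = 0`. -/
def sol (c₁ c₂ z t : ℝ) : ℝ := c₁ * Real.sinh (z * t) + c₂ * Real.sin (z * t)

/-- `y_k'(t, z⁴)`. -/
def sol' (c₁ c₂ z t : ℝ) : ℝ := c₁ * z * Real.cosh (z * t) + c₂ * z * Real.cos (z * t)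

/-- `y_k''(t, z⁴)`. -/
def sol'' (c₁ c₂ z t : ℝ) : ℝ :=
  c₁ * z ^ 2 * Real.sinh (z * t) - c₂ * z ^ 2 * Real.sin (z * t)

/-- `y_k'''(t, z⁴)`. -/
def sol''' (c₁ c₂ z t : ℝ) : ℝ :=
  c₁ * z ^ 3 * Real.cosh (z * t) - c₂ * z ^ 3 * Real.cos (z * t)

/-- `ω₁(z) = y_k'''(1, z⁴) + (z⁴ + γ_k) γ_k^α y_k(1, z⁴)`. -/
def omega1 (γk αe c₁ c₂ z : ℝ) : ℝ :=
  sol''' c₁ c₂ z 1 + (z ^ 4 + γk) * γk ^ αe * sol c₁ c₂ z 1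

/-- `ω₂(z) = y_k''(1, z⁴) − (z⁴ + γ_k) γ_k^α y_k'(1, z⁴)`. -/
def omega2 (γk αe c₁ c₂ z : ℝ) : ℝ :=
  sol'' c₁ c₂ z 1 - (z ^ 4 + γk) * γk ^ αe * sol' c₁ c₂ z 1

/-- The squared norm `‖Ψ‖²_Λ` in `Λ = L₂(0,1) ⊕ ℂ²`:
`∫₀¹ y² dt + γ_k^α y(1)² + γ_k^α y'(1)²`. -/
def normSq (γk αe c₁ c₂ z : ℝ) : ℝ :=
  (∫ t in (0:ℝ)..1, (sol c₁ c₂ z t) ^ 2) + γk ^ αe * (sol c₁ c₂ z 1) ^ 2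
    + γk ^ αe * (sol' c₁ c₂ z 1) ^ 2

end Scalar

/-- Theorem 5.1.  For fixed `k`, let
`f_k(z) = y_k(1,z⁴)·ω₁(z)` where `y_k(t,z⁴) = c₁(z) sinh(zt) + c₂(z) sin(zt)` is
the solution of the scalar fourth-order problem normalized so that the
boundary-coefficient relation `ω₂(z) = 0` holds, and let `z₀ = z_{k,j} > 0` be a
characteristic root (common zero of `ω₁` and `ω₂`, so that
`λ_{k,j} = z₀⁴ + γ_k` is an eigenvalue).  Then
`f_k'(z_{k,j}) = 4 z³_{k,j} ‖Ψ_{k,j}‖²_Λ = 4 z³_{k,j} / c²_{k,j}`. -/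
theorem statement11 (γk αe : ℝ) (hγ : 1 < γk) (hα : 0 < αe ∧ αe < 1/2)
    (c₁ c₂ : ℝ → ℝ) (hc₁ : Differentiable ℝ c₁) (hc₂ : Differentiable ℝ c₂)
    (hnorm : ∀ z, Scalar.omega2 γk αe (c₁ z) (c₂ z) z = 0)
    (z₀ : ℝ) (hz₀ : 0 < z₀)
    (hroot : Scalar.omega1 γk αe (c₁ z₀) (c₂ z₀) z₀ = 0) :
    deriv (fun z => Scalar.sol (c₁ z) (c₂ z) z 1 * Scalar.omega1 γk αe (c₁ z) (c₂ z) z) z₀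
      = 4 * z₀ ^ 3 * Scalar.normSq γk αe (c₁ z₀) (c₂ z₀) z₀ ∧
    ∀ c : ℝ, c ^ 2 * Scalar.normSq γk αe (c₁ z₀) (c₂ z₀) z₀ = 1 →
      deriv (fun z => Scalar.sol (c₁ z) (c₂ z) z 1 * Scalar.omega1 γk αe (c₁ z) (c₂ z) z) z₀
        = 4 * z₀ ^ 3 / c ^ 2 := by
  have hz0 : z₀ ≠ 0 := ne_of_gt hz₀
  -- explicit forms of the hypotheses at z₀
  have h1 : c₁ z₀ * z₀ ^ 3 * Real.cosh z₀ - c₂ z₀ * z₀ ^ 3 * Real.cos z₀ +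
      (z₀ ^ 4 + γk) * γk ^ αe * (c₁ z₀ * Real.sinh z₀ + c₂ z₀ * Real.sin z₀) = 0 := by
    simpa only [Scalar.omega1, Scalar.sol''', Scalar.sol, mul_one] using hroot
  have h2 : c₁ z₀ * z₀ ^ 2 * Real.sinh z₀ - c₂ z₀ * z₀ ^ 2 * Real.sin z₀ -
      (z₀ ^ 4 + γk) * γk ^ αe * (c₁ z₀ * z₀ * Real.cosh z₀ + c₂ z₀ * z₀ * Real.cos z₀) = 0 := by
    simpa only [Scalar.omega2, Scalar.sol'', Scalar.sol', mul_one] using hnorm z₀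
  -- derivative of Y(z) = y(1, z⁴)
  have hY : HasDerivAt (fun z => c₁ z * Real.sinh z + c₂ z * Real.sin z)
      (deriv c₁ z₀ * Real.sinh z₀ + c₁ z₀ * Real.cosh z₀ + (deriv c₂ z₀ * Real.sin z₀ + c₂ z₀ * Real.cos z₀)) z₀ :=
    ((hc₁ z₀).hasDerivAt.mul (Real.hasDerivAt_sinh z₀)).add
      ((hc₂ z₀).hasDerivAt.mul (Real.hasDerivAt_sin z₀))
  -- derivative of ω₁(z)
  have hW : HasDerivAt (fun z => c₁ z * z ^ 3 * Real.cosh z - c₂ z * z ^ 3 * Real.cos z + (z ^ 4 + γk) * γk ^ αe * (c₁ z * Real.sinh z + c₂ z * Real.sin z))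
      ((deriv c₁ z₀ * z₀ ^ 3 + c₁ z₀ * (3 * z₀ ^ 2)) * Real.cosh z₀ + c₁ z₀ * z₀ ^ 3 * Real.sinh z₀ - ((deriv c₂ z₀ * z₀ ^ 3 + c₂ z₀ * (3 * z₀ ^ 2)) * Real.cos z₀ - c₂ z₀ * z₀ ^ 3 * Real.sin z₀) + 4 * z₀ ^ 3 * γk ^ αe * (c₁ z₀ * Real.sinh z₀ + c₂ z₀ * Real.sin z₀) + (z₀ ^ 4 + γk) * γk ^ αe * (deriv c₁ z₀ * Real.sinh z₀ + c₁ z₀ * Real.cosh z₀ + (deriv c₂ z₀ * Real.sin z₀ + c₂ z₀ * Real.cos z₀))) z₀ := by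
    have H := ((((hc₁ z₀).hasDerivAt.mul (hasDerivAt_pow 3 z₀)).mul
        (Real.hasDerivAt_cosh z₀)).sub
        (((hc₂ z₀).hasDerivAt.mul (hasDerivAt_pow 3 z₀)).mul (Real.hasDerivAt_cos z₀))).add
        ((((hasDerivAt_pow 4 z₀).add_const γk).mul_const (γk ^ αe)).mul hY)
    exact H.congr_deriv (by simp only [Pi.mul_apply, Pi.add_apply, Pi.sub_apply, id]; push_cast; ring)
  -- derivative of ω₂(z); it vanishes since ω₂ ≡ 0
  have hW2 : HasDerivAt (fun z => c₁ z * z ^ 2 * Real.sinh z - c₂ z * z ^ 2 * Real.sin z - (z ^ 4 + γk) * γk ^ αe * (c₁ z * z * Real.cosh z + c₂ z * z * Real.cos z))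
      ((deriv c₁ z₀ * z₀ ^ 2 + c₁ z₀ * (2 * z₀)) * Real.sinh z₀ + c₁ z₀ * z₀ ^ 2 * Real.cosh z₀
        - ((deriv c₂ z₀ * z₀ ^ 2 + c₂ z₀ * (2 * z₀)) * Real.sin z₀ + c₂ z₀ * z₀ ^ 2 * Real.cos z₀)
        - (4 * z₀ ^ 3 * γk ^ αe * (c₁ z₀ * z₀ * Real.cosh z₀ + c₂ z₀ * z₀ * Real.cos z₀)
          + (z₀ ^ 4 + γk) * γk ^ αe *
            ((deriv c₁ z₀ * z₀ + c₁ z₀) * Real.cosh z₀ + c₁ z₀ * z₀ * Real.sinh z₀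
              + ((deriv c₂ z₀ * z₀ + c₂ z₀) * Real.cos z₀ - c₂ z₀ * z₀ * Real.sin z₀)))) z₀ := by
    have H := ((((hc₁ z₀).hasDerivAt.mul (hasDerivAt_pow 2 z₀)).mul
        (Real.hasDerivAt_sinh z₀)).sub
        (((hc₂ z₀).hasDerivAt.mul (hasDerivAt_pow 2 z₀)).mul (Real.hasDerivAt_sin z₀))).sub
        ((((hasDerivAt_pow 4 z₀).add_const γk).mul_const (γk ^ αe)).mul
          (((((hc₁ z₀).hasDerivAt.mul (hasDerivAt_id' z₀)).mul (Real.hasDerivAt_cosh z₀))).add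
            ((((hc₂ z₀).hasDerivAt.mul (hasDerivAt_id' z₀)).mul (Real.hasDerivAt_cos z₀)))))
    exact H.congr_deriv (by simp only [Pi.mul_apply, Pi.add_apply, Pi.sub_apply, id]; push_cast; ring)
  have hzero : HasDerivAt (fun z => c₁ z * z ^ 2 * Real.sinh z - c₂ z * z ^ 2 * Real.sin z - (z ^ 4 + γk) * γk ^ αe * (c₁ z * z * Real.cosh z + c₂ z * z * Real.cos z)) 0 z₀ := by
    have he : (fun z => c₁ z * z ^ 2 * Real.sinh z - c₂ z * z ^ 2 * Real.sin z - (z ^ 4 + γk) * γk ^ αe * (c₁ z * z * Real.cosh z + c₂ z * z * Real.cos z)) = fun _ => (0 : ℝ) := by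
      funext z
      simpa only [Scalar.omega2, Scalar.sol'', Scalar.sol', mul_one] using hnorm z
    rw [he]; exact hasDerivAt_const z₀ 0
  have h3 := hW2.unique hzero
  -- closed form of the L² integral
  have hF : ∀ t ∈ Set.uIcc (0:ℝ) 1, HasDerivAt
      (fun t => c₁ z₀ ^ 2 * (Real.sinh (z₀ * t) * Real.cosh (z₀ * t) / (2 * z₀) - t / 2)
        + c₂ z₀ ^ 2 * (t / 2 - Real.sin (z₀ * t) * Real.cos (z₀ * t) / (2 * z₀))
        + c₁ z₀ * c₂ z₀ * ((Real.cosh (z₀ * t) * Real.sin (z₀ * t)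
            - Real.sinh (z₀ * t) * Real.cos (z₀ * t)) / z₀))
      ((c₁ z₀ * Real.sinh (z₀ * t) + c₂ z₀ * Real.sin (z₀ * t)) ^ 2) t := by
    intro t _
    have hzt : HasDerivAt (fun t : ℝ => z₀ * t) (z₀ * 1) t := (hasDerivAt_id t).const_mul z₀
    have T1 := (((hzt.sinh.mul hzt.cosh).div_const (2 * z₀)).sub
      ((hasDerivAt_id t).div_const 2)).const_mul (c₁ z₀ ^ 2)
    have T2 := (((hasDerivAt_id t).div_const 2).sub
      ((hzt.sin.mul hzt.cos).div_const (2 * z₀))).const_mul (c₂ z₀ ^ 2)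
    have T3 := (((hzt.cosh.mul hzt.sin).sub (hzt.sinh.mul hzt.cos)).div_const z₀).const_mul
      (c₁ z₀ * c₂ z₀)
    refine ((T1.add T2).add T3).congr_deriv ?_
    have e1 : Real.cosh (z₀ * t) ^ 2 = Real.sinh (z₀ * t) ^ 2 + 1 := Real.cosh_sq _
    have e2 : Real.sin (z₀ * t) ^ 2 + Real.cos (z₀ * t) ^ 2 = 1 :=
      Real.sin_sq_add_cos_sq _
    field_simp
    linear_combination (c₁ z₀) ^ 2 * e1 - (c₂ z₀) ^ 2 * e2
  have hcont : IntervalIntegrable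
      (fun t => (c₁ z₀ * Real.sinh (z₀ * t) + c₂ z₀ * Real.sin (z₀ * t)) ^ 2)
      MeasureTheory.volume 0 1 := by
    apply Continuous.intervalIntegrable
    fun_prop
  have hInt := intervalIntegral.integral_eq_sub_of_hasDerivAt hF hcont
  have hI : (∫ t in (0:ℝ)..1, (c₁ z₀ * Real.sinh (z₀ * t) + c₂ z₀ * Real.sin (z₀ * t)) ^ 2)
      * (2 * z₀) = c₁ z₀ ^ 2 * (Real.sinh z₀ * Real.cosh z₀ - z₀) + c₂ z₀ ^ 2 * (z₀ - Real.sin z₀ * Real.cos z₀)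
        + 2 * c₁ z₀ * c₂ z₀ * (Real.cosh z₀ * Real.sin z₀ - Real.sinh z₀ * Real.cos z₀) := by
    rw [hInt]
    simp only [mul_one, mul_zero, Real.sinh_zero, Real.sin_zero, Real.cosh_zero,
      Real.cos_zero, zero_div, sub_zero, zero_sub, zero_mul, sub_self]
    field_simp
    ring
  have hcs : Real.cosh z₀ ^ 2 - Real.sinh z₀ ^ 2 = 1 := Real.cosh_sq_sub_sinh_sq z₀
  have hSC : Real.sin z₀ ^ 2 + Real.cos z₀ ^ 2 = 1 := Real.sin_sq_add_cos_sq z₀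
  -- the main derivative computation
  have hfun : (fun z => Scalar.sol (c₁ z) (c₂ z) z 1 * Scalar.omega1 γk αe (c₁ z) (c₂ z) z)
      = fun z => (c₁ z * Real.sinh z + c₂ z * Real.sin z) * (c₁ z * z ^ 3 * Real.cosh z - c₂ z * z ^ 3 * Real.cos z + (z ^ 4 + γk) * γk ^ αe * (c₁ z * Real.sinh z + c₂ z * Real.sin z)) := by
    funext z
    simp only [Scalar.sol, Scalar.omega1, Scalar.sol''', mul_one]
  have hd : deriv (fun z => (c₁ z * Real.sinh z + c₂ z * Real.sin z) * (c₁ z * z ^ 3 * Real.cosh z - c₂ z * z ^ 3 * Real.cos z + (z ^ 4 + γk) * γk ^ αe * (c₁ z * Real.sinh z + c₂ z * Real.sin z))) z₀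
      = (deriv c₁ z₀ * Real.sinh z₀ + c₁ z₀ * Real.cosh z₀ + (deriv c₂ z₀ * Real.sin z₀ + c₂ z₀ * Real.cos z₀)) * (c₁ z₀ * z₀ ^ 3 * Real.cosh z₀ - c₂ z₀ * z₀ ^ 3 * Real.cos z₀ + (z₀ ^ 4 + γk) * γk ^ αe * (c₁ z₀ * Real.sinh z₀ + c₂ z₀ * Real.sin z₀))
        + (c₁ z₀ * Real.sinh z₀ + c₂ z₀ * Real.sin z₀) * ((deriv c₁ z₀ * z₀ ^ 3 + c₁ z₀ * (3 * z₀ ^ 2)) * Real.cosh z₀ + c₁ z₀ * z₀ ^ 3 * Real.sinh z₀ - ((deriv c₂ z₀ * z₀ ^ 3 + c₂ z₀ * (3 * z₀ ^ 2)) * Real.cos z₀ - c₂ z₀ * z₀ ^ 3 * Real.sin z₀) + 4 * z₀ ^ 3 * γk ^ αe * (c₁ z₀ * Real.sinh z₀ + c₂ z₀ * Real.sin z₀) + (z₀ ^ 4 + γk) * γk ^ αe * (deriv c₁ z₀ * Real.sinh z₀ + c₁ z₀ * Real.cosh z₀ + (deriv c₂ z₀ * Real.sin z₀ + c₂ z₀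 * Real.cos z₀))) := (hY.mul hW).deriv
  have main : deriv (fun z => Scalar.sol (c₁ z) (c₂ z) z 1
        * Scalar.omega1 γk αe (c₁ z) (c₂ z) z) z₀
      = 4 * z₀ ^ 3 * Scalar.normSq γk αe (c₁ z₀) (c₂ z₀) z₀ := by
    rw [hfun, hd]
    simp only [Scalar.normSq, Scalar.sol, Scalar.sol', mul_one]
    linear_combination
      (2 * (deriv c₁ z₀ * Real.sinh z₀ + deriv c₂ z₀ * Real.sin z₀ + c₁ z₀ * Real.cosh z₀ + c₂ z₀ * Real.cos z₀)) * h1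
      - (z₀ * (deriv c₁ z₀ * Real.cosh z₀ + deriv c₂ z₀ * Real.cos z₀) + (c₁ z₀ * Real.cosh z₀ + c₂ z₀ * Real.cos z₀)
          + z₀ * (c₁ z₀ * Real.sinh z₀ - c₂ z₀ * Real.sin z₀)) * h2
      + (z₀ * (c₁ z₀ * Real.cosh z₀ + c₂ z₀ * Real.cos z₀)) * h3
      - 2 * z₀ ^ 2 * hI
      - 2 * z₀ ^ 3 * (c₁ z₀) ^ 2 * hcs
      + 2 * z₀ ^ 3 * (c₂ z₀) ^ 2 * hSC
  refine ⟨main, fun cc hcc => ?_⟩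
  have hcc2 : cc ^ 2 ≠ 0 := by
    intro h
    rw [h, zero_mul] at hcc
    exact zero_ne_one hcc
  rw [main, eq_div_iff hcc2]
  linear_combination 4 * z₀ ^ 3 * hcc

end FourthOrderPaper
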